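/- Let p be a prime and let G be a finite p-group with G = AB, where A is a nontrivial normal cyclic subgroup of G and B is a cyclic subgroup of G. Let Z be the unique subgroup of order p of A. Suppose that A ∩ B ≤ Z and that G/Z satisfies the Amit–Ashurst conjecture. Then for any word w such that G_w ⊆ A and G_w is not contained in Z, one has Z ⊊ G_w and P_{w,G}(g) ≥ 1/|G| for all g ∈ G_w. -/

import Mathlib

section AuxUnique27

lemma word_delta {G : Type*} [Group G] (A : Subgroup G) [A.Normal]
    (hcomm : ∀ x ∈ A, ∀ y ∈ A, x * y = y * x)
    {k : ℕ} (w : FreeGroup (Fin k)) :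
    (∀ v a : Fin k → G, (∀ i, a i ∈ A) →
      (FreeGroup.lift v w)⁻¹ * FreeGroup.lift (fun i => v i * a i) w ∈ A) ∧
    (∀ v a b : Fin k → G, (∀ i, a i ∈ A) → (∀ i, b i ∈ A) →
      (FreeGroup.lift v w)⁻¹ * FreeGroup.lift (fun i => v i * (a i * b i)) w =
      ((FreeGroup.lift v w)⁻¹ * FreeGroup.lift (fun i => v i * a i) w) *
      ((FreeGroup.lift v w)⁻¹ * FreeGroup.lift (fun i => v i * b i) w)) := by
  refine FreeGroup.induction_on w ?_ ?_ ?_ ?_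
  · exact ⟨fun v a ha => by simpa using A.one_mem, fun v a b ha hb => by simp⟩
  · intro x
    have hp : (pure x : FreeGroup (Fin k)) = FreeGroup.of x := rfl
    constructor
    · intro v a ha
      simp only [hp, FreeGroup.lift_apply_of]
      have : (v x)⁻¹ * (v x * a x) = a x := by group
      rw [this]; exact ha x
    · intro v a b ha hb
      simp only [hp, FreeGroup.lift_apply_of]
      group
  · intro x _
    have hp : (pure x : FreeGroup (Fin k)) = FreeGroup.of x := rfl
    constructor
    · intro v a ha
      simp only [hp, map_inv, FreeGroup.lift_apply_of]
      have : (v x)⁻¹⁻¹ * (v x * a x)⁻¹ = v x * (a x)⁻¹ * (v x)⁻¹ := by group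
      rw [this]
      exact Subgroup.Normal.conj_mem ‹A.Normal› _ (A.inv_mem (ha x)) (v x)
    · intro v a b ha hb
      simp only [hp, map_inv, FreeGroup.lift_apply_of]
      have h1 : (v x)⁻¹⁻¹ * (v x * (a x * b x))⁻¹
          = (v x * (b x)⁻¹ * (v x)⁻¹) * (v x * (a x)⁻¹ * (v x)⁻¹) := by group
      have h2 : (v x * (b x)⁻¹ * (v x)⁻¹) * (v x * (a x)⁻¹ * (v x)⁻¹)
          = (v x * (a x)⁻¹ * (v x)⁻¹) * (v x * (b x)⁻¹ * (v x)⁻¹) :=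
        hcomm _ (Subgroup.Normal.conj_mem ‹A.Normal› _ (A.inv_mem (hb x)) (v x)) _
          (Subgroup.Normal.conj_mem ‹A.Normal› _ (A.inv_mem (ha x)) (v x))
      rw [h1, h2]
      group
  · intro u u' hu hu'
    obtain ⟨hu1, hu2⟩ := hu
    obtain ⟨hu'1, hu'2⟩ := hu'
    constructor
    · intro v a ha
      have key : (FreeGroup.lift v (u * u'))⁻¹ * FreeGroup.lift (fun i => v i * a i) (u * u')
          = ((FreeGroup.lift v u')⁻¹ *
              ((FreeGroup.lift v u)⁻¹ * FreeGroup.lift (fun i => v i * a i) u) *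
              (FreeGroup.lift v u')) *
              ((FreeGroup.lift v u')⁻¹ * FreeGroup.lift (fun i => v i * a i) u') := by
        simp only [map_mul]; group
      rw [key]
      exact A.mul_mem (Subgroup.Normal.conj_mem' ‹A.Normal› _ (hu1 v a ha) _) (hu'1 v a ha)
    · intro v a b ha hb
      have m1 := hu1 v b hb
      have m2 := hu'1 v a ha
      have h2 := hu2 v a b ha hb
      have h2' := hu'2 v a b ha hb
      simp only [map_mul]
      rw [show (FreeGroup.lift fun i => v i * (a i * b i)) u
          = (FreeGroup.lift v) u * ((((FreeGroup.lift v) u)⁻¹ * (FreeGroup.lift fun i => v i * a i) u) * (((FreeGroup.lift v) u)⁻¹ * (FreeGroup.lift fun i => v i * b i) u)) from by rw [← h2]; group,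
        show (FreeGroup.lift fun i => v i * (a i * b i)) u'
          = (FreeGroup.lift v) u' * ((((FreeGroup.lift v) u')⁻¹ * (FreeGroup.lift fun i => v i * a i) u') * (((FreeGroup.lift v) u')⁻¹ * (FreeGroup.lift fun i => v i * b i) u')) from by rw [← h2']; group]
      set Wu := (FreeGroup.lift v) u with hWu
      set Wu' := (FreeGroup.lift v) u' with hWu'
      set Au := (FreeGroup.lift fun i => v i * a i) u with hAu
      set Bu := (FreeGroup.lift fun i => v i * b i) u with hBu
      set Au' := (FreeGroup.lift fun i => v i * a i) u' with hAu2
      set Bu' := (FreeGroup.lift fun i => v i * b i) u' with hBu2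
      clear_value Wu Wu' Au Bu Au' Bu'
      have hc : (Wu'⁻¹ * (Wu⁻¹ * Bu) * Wu') * (Wu'⁻¹ * Au')
          = (Wu'⁻¹ * Au') * (Wu'⁻¹ * (Wu⁻¹ * Bu) * Wu') :=
        hcomm _ (Subgroup.Normal.conj_mem' ‹A.Normal› _ m1 Wu') _ m2
      calc (Wu * Wu')⁻¹ * (Wu * ((Wu⁻¹ * Au) * (Wu⁻¹ * Bu)) * (Wu' * ((Wu'⁻¹ * Au') * (Wu'⁻¹ * Bu'))))
          = (Wu'⁻¹ * (Wu⁻¹ * Au) * Wu') * (((Wu'⁻¹ * (Wu⁻¹ * Bu) * Wu') * (Wu'⁻¹ * Au')) * (Wu'⁻¹ * Bu')) := by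
            group
        _ = (Wu'⁻¹ * (Wu⁻¹ * Au) * Wu') * (((Wu'⁻¹ * Au') * (Wu'⁻¹ * (Wu⁻¹ * Bu) * Wu')) * (Wu'⁻¹ * Bu')) := by
            rw [hc]
        _ = ((Wu * Wu')⁻¹ * (Au * Au')) * ((Wu * Wu')⁻¹ * (Bu * Bu')) := by group


lemma lift_mem_subgroup {G : Type*} [Group G] {k : ℕ} (B : Subgroup G) (v : Fin k → G)
    (hv : ∀ i, v i ∈ B) (w : FreeGroup (Fin k)) : FreeGroup.lift v w ∈ B := by
  have h : B.subtype.comp (FreeGroup.lift (fun i => (⟨v i, hv i⟩ : B))) = FreeGroup.lift v := by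
    apply FreeGroup.ext_hom
    intro i
    simp
  rw [← h]
  simp only [MonoidHom.comp_apply]
  exact SetLike.coe_mem _

lemma lift_quot {G : Type*} [Group G] (Z : Subgroup G) [Z.Normal] {k : ℕ}
    (w : FreeGroup (Fin k)) (v : Fin k → G) :
    FreeGroup.lift (fun i => (QuotientGroup.mk (v i) : G ⧸ Z)) w
      = QuotientGroup.mk (FreeGroup.lift v w) := by
  have h : FreeGroup.lift (fun i => (QuotientGroup.mk (v i) : G ⧸ Z))
      = (QuotientGroup.mk' Z).comp (FreeGroup.lift v) := by
    apply FreeGroup.ext_hom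
    intro i
    simp
  rw [h]
  rfl

lemma bot_or_le {p : ℕ} (hp : p.Prime) {G : Type*} [Group G] [Finite G] (hG : IsPGroup p G)
    (A Z : Subgroup G) (hZuniq : ∀ Z' : Subgroup G, Z' ≤ A → Nat.card Z' = p → Z' = Z)
    (H : Subgroup G) (hHA : H ≤ A) : H = ⊥ ∨ Z ≤ H := by
  by_cases hH : H = ⊥
  · exact Or.inl hH
  right
  obtain ⟨⟨x, hxH⟩, hx1⟩ := Subgroup.ne_bot_iff_exists_ne_one.mp hH
  have hx1' : x ≠ 1 := by
    intro h
    exact hx1 (Subtype.ext h)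
  obtain ⟨n, hn⟩ := hG x
  have hdvd : orderOf x ∣ p ^ n := orderOf_dvd_of_pow_eq_one hn
  obtain ⟨m, hm, hord⟩ := (Nat.dvd_prime_pow hp).mp hdvd
  have hm1 : 1 ≤ m := by
    rcases Nat.eq_zero_or_pos m with h0 | h0
    · exfalso
      apply hx1'
      have : orderOf x = 1 := by rw [hord, h0, pow_zero]
      exact orderOf_eq_one_iff.mp this
    · exact h0
  set y := x ^ p ^ (m - 1) with hy
  have hordy : orderOf y = p := by
    rw [hy, orderOf_pow, hord]
    have hgcd : Nat.gcd (p ^ m) (p ^ (m - 1)) = p ^ (m - 1) := by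
      rw [Nat.gcd_eq_right (pow_dvd_pow p (Nat.sub_le m 1))]
    rw [hgcd, Nat.pow_div (Nat.sub_le m 1) hp.pos, Nat.sub_sub_self hm1, pow_one]
  have hyA : y ∈ A := hHA (H.pow_mem hxH _)
  have hyH : y ∈ H := H.pow_mem hxH _
  have hZ' : Subgroup.zpowers y = Z := by
    apply hZuniq
    · exact Subgroup.zpowers_le.mpr hyA
    · rw [Nat.card_zpowers, hordy]
  rw [← hZ']
  exact Subgroup.zpowers_le.mpr hyH


lemma card_fiber_eq {H K : Type*} [Group H] [Group K] (f : H →* K) (x y : K)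
    (hxy : x ∈ f.range ↔ y ∈ f.range) :
    Nat.card {h : H // f h = x} = Nat.card {h : H // f h = y} := by
  by_cases hx : x ∈ f.range
  · obtain ⟨h₀, hh₀⟩ := hx
    obtain ⟨h₁, hh₁⟩ := hxy.mp ⟨h₀, hh₀⟩
    apply Nat.card_congr
    refine ⟨fun a => ⟨a.1 * h₀⁻¹ * h₁, by simp [map_mul, map_inv, a.2, hh₀, hh₁]⟩,
            fun a => ⟨a.1 * h₁⁻¹ * h₀, by simp [map_mul, map_inv, a.2, hh₀, hh₁]⟩, ?_, ?_⟩
    · intro a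
      ext
      simp [mul_assoc]
    · intro a
      ext
      simp [mul_assoc]
  · have hy : ¬ y ∈ f.range := fun h => hx (hxy.mpr h)
    have ex : IsEmpty {h : H // f h = x} := ⟨fun a => hx ⟨a.1, a.2⟩⟩
    have ey : IsEmpty {h : H // f h = y} := ⟨fun a => hy ⟨a.1, a.2⟩⟩
    rw [Nat.card_of_isEmpty, Nat.card_of_isEmpty]

-- fiber of hom nonneg/le lemma: if x in range and y maybe not
lemma card_fiber_le {H K : Type*} [Group H] [Group K] (f : H →* K) (x y : K)
    (hxy : x ∈ f.range → y ∈ f.range) :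
    Nat.card {h : H // f h = x} ≤ Nat.card {h : H // f h = y} := by
  by_cases hx : x ∈ f.range
  · exact (card_fiber_eq f x y ⟨fun _ => hxy hx, fun _ => hx⟩).le
  · have ex : IsEmpty {h : H // f h = x} := ⟨fun a => hx ⟨a.1, a.2⟩⟩
    rw [Nat.card_of_isEmpty]
    exact Nat.zero_le _


lemma stepA {G : Type*} [Group G] [Finite G] (A : Subgroup G) {k : ℕ} (w : FreeGroup (Fin k))
    [Fintype (Fin k → G)]
    (Φ : ∀ _ : Fin k → G, (Fin k → ↥A) →* G)
    (hΦapp : ∀ v a, Φ v a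
      = (FreeGroup.lift v w)⁻¹ * FreeGroup.lift (fun i => v i * (a i : G)) w)
    (g : G) :
    Nat.card {v : Fin k → G // FreeGroup.lift v w = g} * Nat.card (Fin k → ↥A)
      = ∑ v : Fin k → G,
          Nat.card {a : Fin k → ↥A // Φ v a = (FreeGroup.lift v w)⁻¹ * g} := by
  classical
  have e1 : {q : (Fin k → G) × (Fin k → ↥A) //
        FreeGroup.lift (fun i => q.1 i * (q.2 i : G)) w = g}
      ≃ {v : Fin k → G // FreeGroup.lift v w = g} × (Fin k → ↥A) := by
    refine ⟨fun q => (⟨fun i => q.1.1 i * (q.1.2 i : G), q.2⟩, q.1.2),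
            fun r => ⟨(fun i => r.1.1 i * ((r.2 i : G))⁻¹, r.2), ?_⟩, ?_, ?_⟩
    · have h : (fun i => r.1.1 i * ((r.2 i : G))⁻¹ * (r.2 i : G)) = r.1.1 := by
        funext i; group
      rw [h, r.1.2]
    · intro q
      apply Subtype.ext
      apply Prod.ext
      · funext i; simp
      · rfl
    · intro r
      apply Prod.ext
      · apply Subtype.ext
        funext i; simp
      · rfl
  have e2 : {q : (Fin k → G) × (Fin k → ↥A) //
        FreeGroup.lift (fun i => q.1 i * (q.2 i : G)) w = g}
      ≃ Σ v : Fin k → G, {a : Fin k → ↥A // Φ v a = (FreeGroup.lift v w)⁻¹ * g} := by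
    refine ⟨fun q => ⟨q.1.1, ⟨q.1.2, ?_⟩⟩, fun s => ⟨(s.1, s.2.1), ?_⟩, ?_, ?_⟩
    · rw [hΦapp, q.2]
    · have := s.2.2
      rw [hΦapp] at this
      exact mul_left_cancel this
    · intro q; rfl
    · intro s; rfl
  calc Nat.card {v : Fin k → G // FreeGroup.lift v w = g} * Nat.card (Fin k → ↥A)
      = Nat.card ({v : Fin k → G // FreeGroup.lift v w = g} × (Fin k → ↥A)) := by
        rw [Nat.card_prod]
    _ = Nat.card {q : (Fin k → G) × (Fin k → ↥A) //
          FreeGroup.lift (fun i => q.1 i * (q.2 i : G)) w = g} := (Nat.card_congr e1).symm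
    _ = Nat.card (Σ v : Fin k → G,
          {a : Fin k → ↥A // Φ v a = (FreeGroup.lift v w)⁻¹ * g}) := Nat.card_congr e2
    _ = ∑ v : Fin k → G,
          Nat.card {a : Fin k → ↥A // Φ v a = (FreeGroup.lift v w)⁻¹ * g} := by
        letI : ∀ v : Fin k → G, Fintype {a : Fin k → ↥A // Φ v a = (FreeGroup.lift v w)⁻¹ * g} :=
          fun v => Fintype.ofFinite _
        rw [Nat.card_eq_fintype_card, Fintype.card_sigma]
        exact Finset.sum_congr rfl fun v _ => Nat.card_eq_fintype_card.symm


lemma coset_count {G : Type*} [Group G] [Finite G] (Z : Subgroup G) [Z.Normal]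
    [Fintype ↥Z] {k : ℕ} (w : FreeGroup (Fin k)) (g : G) :
    Nat.card {v : Fin k → G //
        (QuotientGroup.mk (FreeGroup.lift v w) : G ⧸ Z) = QuotientGroup.mk g}
      = ∑ z : ↥Z, Nat.card {v : Fin k → G // FreeGroup.lift v w = g * (z : G)} := by
  classical
  let f : (Σ z : ↥Z, {v : Fin k → G // FreeGroup.lift v w = g * (z : G)}) →
      {v : Fin k → G //
        (QuotientGroup.mk (FreeGroup.lift v w) : G ⧸ Z) = QuotientGroup.mk g} :=
    fun s => ⟨s.2.1, by rw [s.2.2, QuotientGroup.mk_mul_of_mem g s.1.2]⟩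
  have hbij : Function.Bijective f := by
    constructor
    · rintro ⟨⟨z, hz⟩, ⟨v, hv⟩⟩ ⟨⟨z', hz'⟩, ⟨v', hv'⟩⟩ h
      have hvv : v = v' := congrArg Subtype.val h
      subst hvv
      have hzz : z = z' := by
        have := hv.symm.trans hv'
        exact mul_left_cancel this
      subst hzz
      rfl
    · rintro ⟨v, hv⟩
      have hmem : g⁻¹ * FreeGroup.lift v w ∈ Z := QuotientGroup.eq.mp hv.symm
      refine ⟨⟨⟨g⁻¹ * FreeGroup.lift v w, hmem⟩, ⟨v, by group⟩⟩, rfl⟩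
  have : Nat.card (Σ z : ↥Z, {v : Fin k → G // FreeGroup.lift v w = g * (z : G)})
      = Nat.card {v : Fin k → G //
        (QuotientGroup.mk (FreeGroup.lift v w) : G ⧸ Z) = QuotientGroup.mk g} :=
    Nat.card_congr (Equiv.ofBijective f hbij)
  rw [← this]
  letI : ∀ z : ↥Z, Fintype {v : Fin k → G // FreeGroup.lift v w = g * (z : G)} :=
    fun z => Fintype.ofFinite _
  rw [Nat.card_eq_fintype_card, Fintype.card_sigma]
  exact Finset.sum_congr rfl fun z _ => Nat.card_eq_fintype_card.symm

lemma quot_lower {G : Type*} [Group G] [Finite G] (Z : Subgroup G) [Z.Normal]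
    {k : ℕ} (w : FreeGroup (Fin k)) (g : G) :
    Nat.card {u : Fin k → G ⧸ Z // FreeGroup.lift u w = (QuotientGroup.mk g : G ⧸ Z)}
        * Nat.card (Fin k → ↥Z)
      ≤ Nat.card {v : Fin k → G //
          (QuotientGroup.mk (FreeGroup.lift v w) : G ⧸ Z) = QuotientGroup.mk g} := by
  classical
  have lift_quot : ∀ v : Fin k → G,
      FreeGroup.lift (fun i => (QuotientGroup.mk (v i) : G ⧸ Z)) w
        = QuotientGroup.mk (FreeGroup.lift v w) := by
    intro v
    have h : FreeGroup.lift (fun i => (QuotientGroup.mk (v i) : G ⧸ Z))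
        = (QuotientGroup.mk' Z).comp (FreeGroup.lift v) := by
      apply FreeGroup.ext_hom
      intro i
      simp
    rw [h]
    rfl
  set J : {u : Fin k → G ⧸ Z // FreeGroup.lift u w = (QuotientGroup.mk g : G ⧸ Z)}
      × (Fin k → ↥Z) →
      {v : Fin k → G //
          (QuotientGroup.mk (FreeGroup.lift v w) : G ⧸ Z) = QuotientGroup.mk g} :=
    fun r => ⟨fun i => (r.1.1 i).out * (r.2 i : G), by
      have hu : (fun i => (QuotientGroup.mk ((r.1.1 i).out * (r.2 i : G)) : G ⧸ Z)) = r.1.1 := by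
        funext i
        rw [QuotientGroup.mk_mul_of_mem _ (r.2 i).2, QuotientGroup.out_eq']
      rw [← lift_quot, hu, r.1.2]⟩ with hJ
  have hJinj : Function.Injective J := by
    rintro ⟨⟨u, hu⟩, z⟩ ⟨⟨u', hu'⟩, z'⟩ h
    have hv : (fun i => (u i).out * (z i : G)) = (fun i => (u' i).out * (z' i : G)) :=
      congrArg Subtype.val h
    have huu : u = u' := by
      funext i
      have := congrFun hv i
      calc u i = QuotientGroup.mk ((u i).out * (z i : G)) := by
            rw [QuotientGroup.mk_mul_of_mem _ (z i).2, QuotientGroup.out_eq']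
        _ = QuotientGroup.mk ((u' i).out * (z' i : G)) := by rw [this]
        _ = u' i := by rw [QuotientGroup.mk_mul_of_mem _ (z' i).2, QuotientGroup.out_eq']
    subst huu
    have hzz : z = z' := by
      funext i
      have := congrFun hv i
      exact Subtype.ext (mul_left_cancel this)
    subst hzz
    rfl
  calc Nat.card {u : Fin k → G ⧸ Z // FreeGroup.lift u w = (QuotientGroup.mk g : G ⧸ Z)}
        * Nat.card (Fin k → ↥Z)
      = Nat.card ({u : Fin k → G ⧸ Z // FreeGroup.lift u w = (QuotientGroup.mk g : G ⧸ Z)}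
          × (Fin k → ↥Z)) := (Nat.card_prod _ _).symm
    _ ≤ _ := Nat.card_le_card_of_injective J hJinj

end AuxUnique27

/-- A finite group `G` satisfies the Amit–Ashurst conjecture if
`P_{w,G}(g) ≥ 1/|G|` for every word `w` in any number of variables and every
`g` in the image of the word map. -/
def AmitAshurst (G : Type*) [Group G] : Prop :=
  ∀ (k : ℕ) (w : FreeGroup (Fin k)) (g : G),
    (∃ v : Fin k → G, (FreeGroup.lift v) w = g) →
    (Nat.card {v : Fin k → G // (FreeGroup.lift v) w = g} : ℝ) / (Nat.card G : ℝ) ^ k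
      ≥ 1 / (Nat.card G : ℝ)

/-- Let `G` be a finite `p`-group with `G = AB`, where `A` is a
nontrivial normal cyclic subgroup and `B` a cyclic subgroup, and let `Z` be the
unique subgroup of order `p` of `A`. Suppose `A ∩ B ≤ Z` and `G/Z` satisfies
the Amit–Ashurst conjecture. Then for any word `w` with `G_w ⊆ A` and
`G_w ⊄ Z`, one has `Z ⊊ G_w` and `P_{w,G}(g) ≥ 1/|G|` for all `g ∈ G_w`. -/
theorem amit_ashurst_of_intersection_in_Z
    {p : ℕ} (hp : p.Prime) {G : Type*} [Group G] [Finite G] (hG : IsPGroup p G)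
    (A B Z : Subgroup G) [A.Normal] (hAcyc : IsCyclic ↥A) (hBcyc : IsCyclic ↥B)
    (hAne : A ≠ ⊥)
    (hAB : ∀ g : G, ∃ a ∈ A, ∃ b ∈ B, g = a * b)
    [Z.Normal] (hZA : Z ≤ A) (hZcard : Nat.card Z = p)
    (hZuniq : ∀ Z' : Subgroup G, Z' ≤ A → Nat.card Z' = p → Z' = Z)
    (hABZ : A ⊓ B ≤ Z)
    (hAA : AmitAshurst (G ⧸ Z))
    (k : ℕ) (w : FreeGroup (Fin k))
    (hwA : ∀ g : G, (∃ v : Fin k → G, (FreeGroup.lift v) w = g) → g ∈ A)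
    (hwZ : ¬ ∀ g : G, (∃ v : Fin k → G, (FreeGroup.lift v) w = g) → g ∈ Z) :
    (Z : Set G) ⊂ {g : G | ∃ v : Fin k → G, (FreeGroup.lift v) w = g} ∧
      ∀ g : G, (∃ v : Fin k → G, (FreeGroup.lift v) w = g) →
        (Nat.card {v : Fin k → G // (FreeGroup.lift v) w = g} : ℝ) / (Nat.card G : ℝ) ^ k
          ≥ 1 / (Nat.card G : ℝ) := by
  classical
  letI : Fintype G := Fintype.ofFinite G
  letI : Fintype (↥Z) := Fintype.ofFinite _
  push_neg at hwZ
  obtain ⟨g0, hg0w, hg0Z⟩ := hwZ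
  -- commutativity of elements of A
  have hcomm : ∀ x ∈ A, ∀ y ∈ A, x * y = y * x := by
    obtain ⟨⟨σ, hσ⟩⟩ := hAcyc
    intro x hx y hy
    obtain ⟨m, hm⟩ := Subgroup.mem_zpowers_iff.mp (hσ ⟨x, hx⟩)
    obtain ⟨n, hn⟩ := Subgroup.mem_zpowers_iff.mp (hσ ⟨y, hy⟩)
    have h : (⟨x, hx⟩ : ↥A) * ⟨y, hy⟩ = ⟨y, hy⟩ * ⟨x, hx⟩ := by
      rw [← hm, ← hn, ← zpow_add, ← zpow_add, add_comm]
    have h2 := congrArg Subtype.val h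
    simpa using h2
  obtain ⟨hmem, hadd⟩ := word_delta A hcomm w
  -- the derivative homomorphisms
  have Φex : ∀ v : Fin k → G, ∃ f : (Fin k → ↥A) →* G,
      ∀ a, f a = (FreeGroup.lift v w)⁻¹ * FreeGroup.lift (fun i => v i * (a i : G)) w := by
    intro v
    refine ⟨MonoidHom.mk' (fun a =>
      (FreeGroup.lift v w)⁻¹ * FreeGroup.lift (fun i => v i * (a i : G)) w) ?_, fun a => rfl⟩
    intro a b
    have h := hadd v (fun i => (a i : G)) (fun i => (b i : G))
      (fun i => (a i).2) (fun i => (b i).2)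
    simpa using h
  choose Φ hΦapp using Φex
  have hΦA : ∀ (v : Fin k → G) (a : Fin k → ↥A), Φ v a ∈ A := by
    intro v a
    rw [hΦapp]
    exact hmem v _ (fun i => (a i).2)
  have hRA : ∀ v : Fin k → G, (Φ v).range ≤ A := by
    rintro v x ⟨a, rfl⟩
    exact hΦA v a
  have hdich : ∀ v : Fin k → G, (Φ v).range = ⊥ ∨ Z ≤ (Φ v).range :=
    fun v => bot_or_le hp hG A Z hZuniq _ (hRA v)
  -- the base value of each orbit lies in `Z` up to the range
  have hWZ : ∀ v : Fin k → G, ∃ z ∈ Z, (FreeGroup.lift v w)⁻¹ * z ∈ (Φ v).range := by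
    intro v
    choose α hα β hβ hd using fun i => hAB (v i)
    have hmemA : ∀ i, (v i)⁻¹ * β i ∈ A := by
      intro i
      rw [hd i]
      have h : (α i * β i)⁻¹ * β i = (β i)⁻¹ * (α i)⁻¹ * (β i) := by group
      rw [h]
      exact Subgroup.Normal.conj_mem' ‹A.Normal› _ (A.inv_mem (hα i)) _
    refine ⟨FreeGroup.lift β w,
      hABZ ⟨hwA _ ⟨β, rfl⟩, lift_mem_subgroup B β hβ w⟩, ?_⟩
    refine ⟨fun i => ⟨(v i)⁻¹ * β i, hmemA i⟩, ?_⟩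
    rw [hΦapp]
    show (FreeGroup.lift v w)⁻¹ *
        FreeGroup.lift (fun i => v i * ((⟨(v i)⁻¹ * β i, hmemA i⟩ : ↥A) : G)) w
      = (FreeGroup.lift v w)⁻¹ * FreeGroup.lift β w
    have h : (fun i => v i * ((⟨(v i)⁻¹ * β i, hmemA i⟩ : ↥A) : G)) = β := by
      funext i
      show v i * ((v i)⁻¹ * β i) = β i
      group
    rw [h]
  have cardA_pos : 0 < Nat.card (Fin k → ↥A) := Nat.card_pos
  -- (C1): fibre counts are constant on nontrivial cosets of Z
  have hconst : ∀ g : G, g ∉ Z → ∀ z : ↥Z,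
      Nat.card {v : Fin k → G // FreeGroup.lift v w = g * (z : G)}
        = Nat.card {v : Fin k → G // FreeGroup.lift v w = g} := by
    intro g hgZ z
    have hsum := stepA A w Φ hΦapp (g * (z : G))
    have hsum' := stepA A w Φ hΦapp g
    have heq : ∀ v : Fin k → G,
        Nat.card {a : Fin k → ↥A // Φ v a = (FreeGroup.lift v w)⁻¹ * (g * (z : G))}
          = Nat.card {a : Fin k → ↥A // Φ v a = (FreeGroup.lift v w)⁻¹ * g} := by
      intro v
      apply card_fiber_eq
      rcases hdich v with hbot | hZle
      · obtain ⟨z0, hz0, hz0r⟩ := hWZ v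
        rw [hbot] at hz0r ⊢
        have hW : FreeGroup.lift v w = z0 :=
          inv_mul_eq_one.mp (Subgroup.mem_bot.mp hz0r)
        constructor
        · intro hx
          exfalso
          have h1 := Subgroup.mem_bot.mp hx
          have : g * (z : G) = FreeGroup.lift v w := (inv_mul_eq_one.mp h1).symm
          apply hgZ
          have hgz : g * (z : G) ∈ Z := by rw [this, hW]; exact hz0
          have := Z.mul_mem hgz (Z.inv_mem z.2)
          simpa using this
        · intro hx
          exfalso
          have h1 := Subgroup.mem_bot.mp hx
          have : g = FreeGroup.lift v w := (inv_mul_eq_one.mp h1).symm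
          exact hgZ (by rw [this, hW]; exact hz0)
      · constructor
        · intro hx
          have h1 : (FreeGroup.lift v w)⁻¹ * g
              = ((FreeGroup.lift v w)⁻¹ * (g * (z : G))) * ((z : G))⁻¹ := by group
          rw [h1]
          exact mul_mem hx (hZle (Z.inv_mem z.2))
        · intro hx
          have h1 : (FreeGroup.lift v w)⁻¹ * (g * (z : G))
              = ((FreeGroup.lift v w)⁻¹ * g) * (z : G) := by group
          rw [h1]
          exact mul_mem hx (hZle z.2)
    have hmul : Nat.card {v : Fin k → G // FreeGroup.lift v w = g * (z : G)}
          * Nat.card (Fin k → ↥A)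
        = Nat.card {v : Fin k → G // FreeGroup.lift v w = g} * Nat.card (Fin k → ↥A) := by
      rw [hsum, hsum']
      exact Finset.sum_congr rfl fun v _ => heq v
    exact Nat.eq_of_mul_eq_mul_right cardA_pos hmul
  -- (C3): elements of Z have at least as many preimages as g0
  have hZge : ∀ z : G, z ∈ Z →
      Nat.card {v : Fin k → G // FreeGroup.lift v w = g0}
        ≤ Nat.card {v : Fin k → G // FreeGroup.lift v w = z} := by
    intro z hz
    have hsum := stepA A w Φ hΦapp g0
    have hsum' := stepA A w Φ hΦapp z
    have hle : ∀ v : Fin k → G,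
        Nat.card {a : Fin k → ↥A // Φ v a = (FreeGroup.lift v w)⁻¹ * g0}
          ≤ Nat.card {a : Fin k → ↥A // Φ v a = (FreeGroup.lift v w)⁻¹ * z} := by
      intro v
      apply card_fiber_le
      intro hx
      obtain ⟨z0, hz0, hz0r⟩ := hWZ v
      rcases hdich v with hbot | hZle
      · exfalso
        rw [hbot] at hx hz0r
        have h1 := Subgroup.mem_bot.mp hx
        have h2 := Subgroup.mem_bot.mp hz0r
        apply hg0Z
        have hg0' : g0 = FreeGroup.lift v w := (inv_mul_eq_one.mp h1).symm
        have hW : FreeGroup.lift v w = z0 := inv_mul_eq_one.mp h2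
        rw [hg0', hW]
        exact hz0
      · have h1 : (FreeGroup.lift v w)⁻¹ * z
            = ((FreeGroup.lift v w)⁻¹ * z0) * (z0⁻¹ * z) := by group
        rw [h1]
        exact mul_mem hz0r (hZle (Z.mul_mem (Z.inv_mem hz0) hz))
    have hmul : Nat.card {v : Fin k → G // FreeGroup.lift v w = g0}
          * Nat.card (Fin k → ↥A)
        ≤ Nat.card {v : Fin k → G // FreeGroup.lift v w = z} * Nat.card (Fin k → ↥A) := by
      rw [hsum, hsum']
      exact Finset.sum_le_sum fun v _ => hle v
    exact Nat.le_of_mul_le_mul_right hmul cardA_pos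
  -- Amit-Ashurst bound for the quotient, in ℕ
  have hQpos : 0 < Nat.card (G ⧸ Z) := Nat.card_pos
  have hAAnat : ∀ g : G, (∃ v : Fin k → G, FreeGroup.lift v w = g) →
      Nat.card (G ⧸ Z) ^ k ≤
        Nat.card {u : Fin k → G ⧸ Z //
          FreeGroup.lift u w = (QuotientGroup.mk g : G ⧸ Z)} * Nat.card (G ⧸ Z) := by
    rintro g ⟨v, hv⟩
    have him : ∃ u : Fin k → G ⧸ Z, FreeGroup.lift u w = (QuotientGroup.mk g : G ⧸ Z) :=
      ⟨fun i => QuotientGroup.mk (v i), by rw [lift_quot Z w v, hv]⟩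
    have hineq := hAA k w (QuotientGroup.mk g) him
    rw [ge_iff_le, div_le_div_iff₀ (by positivity) (by positivity)] at hineq
    rw [one_mul] at hineq
    exact_mod_cast hineq
  have hcardZ : Nat.card (Fin k → ↥Z) = p ^ k := by
    rw [Nat.card_pi, Finset.prod_const, Finset.card_univ, Fintype.card_fin, hZcard]
  have hGpq : Nat.card G = Nat.card (G ⧸ Z) * p := by
    rw [Subgroup.card_eq_card_quotient_mul_card_subgroup Z, hZcard]
  -- main bound for g outside Z
  have hmainNotZ : ∀ g : G, (∃ v : Fin k → G, FreeGroup.lift v w = g) → g ∉ Z →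
      Nat.card G ^ k ≤ Nat.card {v : Fin k → G // FreeGroup.lift v w = g} * Nat.card G := by
    intro g hgw hgZ
    have h1 := coset_count Z w g
    have h2 : ∑ z : ↥Z, Nat.card {v : Fin k → G // FreeGroup.lift v w = g * (z : G)}
        = p * Nat.card {v : Fin k → G // FreeGroup.lift v w = g} := by
      rw [Finset.sum_congr rfl fun z _ => hconst g hgZ z, Finset.sum_const,
        Finset.card_univ, smul_eq_mul]
      congr 1
      rw [← hZcard, Nat.card_eq_fintype_card]
    have h3 := quot_lower Z w g
    rw [h1, h2, hcardZ] at h3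
    -- h3 : N̄ * p^k ≤ p * N g
    have h4 := hAAnat g hgw
    -- combine
    calc Nat.card G ^ k = (Nat.card (G ⧸ Z))^k * p^k := by rw [hGpq, mul_pow]
      _ ≤ (Nat.card {u : Fin k → G ⧸ Z //
            FreeGroup.lift u w = (QuotientGroup.mk g : G ⧸ Z)} * Nat.card (G ⧸ Z)) * p^k :=
          Nat.mul_le_mul_right _ h4
      _ = (Nat.card {u : Fin k → G ⧸ Z //
            FreeGroup.lift u w = (QuotientGroup.mk g : G ⧸ Z)} * p^k) * Nat.card (G ⧸ Z) := by
          ring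
      _ ≤ (p * Nat.card {v : Fin k → G // FreeGroup.lift v w = g}) * Nat.card (G ⧸ Z) :=
          Nat.mul_le_mul_right _ h3
      _ = Nat.card {v : Fin k → G // FreeGroup.lift v w = g} * Nat.card G := by
          rw [hGpq]; ring
  have hmain : ∀ g : G, (∃ v : Fin k → G, FreeGroup.lift v w = g) →
      Nat.card G ^ k ≤ Nat.card {v : Fin k → G // FreeGroup.lift v w = g} * Nat.card G := by
    intro g hgw
    by_cases hgZ : g ∈ Z
    · calc Nat.card G ^ k
          ≤ Nat.card {v : Fin k → G // FreeGroup.lift v w = g0} * Nat.card G :=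
            hmainNotZ g0 hg0w hg0Z
        _ ≤ Nat.card {v : Fin k → G // FreeGroup.lift v w = g} * Nat.card G :=
            Nat.mul_le_mul_right _ (hZge g hgZ)
    · exact hmainNotZ g hgw hgZ
  have hGpos : 0 < Nat.card G := Nat.card_pos
  constructor
  · rw [Set.ssubset_def]
    constructor
    · intro z hz
      have h0 : 0 < Nat.card {v : Fin k → G // FreeGroup.lift v w = g0} := by
        obtain ⟨v0, hv0⟩ := hg0w
        exact Nat.card_pos_iff.mpr ⟨⟨⟨v0, hv0⟩⟩, inferInstance⟩
      have hpos : 0 < Nat.card {v : Fin k → G // FreeGroup.lift v w = z} :=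
        lt_of_lt_of_le h0 (hZge z hz)
      obtain ⟨⟨v, hv⟩⟩ := (Nat.card_pos_iff.mp hpos).1
      exact ⟨v, hv⟩
    · intro hsup
      exact hg0Z (hsup hg0w)
  · intro g hgw
    have h := hmain g hgw
    rw [ge_iff_le, div_le_div_iff₀ (by positivity) (by positivity), one_mul]
    exact_mod_cast h
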